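/- The problem of finding a maximal acyclic subgraph of a directed graph G with Boolean adjacency matrix A is equivalent to finding the closest nonnegative matrix X to A in Frobenius norm with ρ(X)=0: every optimal X for the matrix problem is a Boolean matrix X ≤ A whose graph is a maximal acyclic subgraph, and the minimal Frobenius distance equals the square root of the minimal number of edges that must be deleted from G to make it acyclic. -/

import Mathlib

open scoped Classical

/-- Spectral radius of a real square matrix. -/
noncomputable def specRad {m : Type*} [Fintype m] [DecidableEq m]
    (A : Matrix m m ℝ) : ℝ :=
  sSup ((fun μ : ℂ => ‖μ‖) '' spectrum ℂ (A.map (algebraMap ℝ ℂ)))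

/-- Frobenius norm of a real matrix. -/
noncomputable def frob {n : ℕ} (M : Matrix (Fin n) (Fin n) ℝ) : ℝ :=
  Real.sqrt (∑ i, ∑ j, (M i j) ^ 2)

/-- A directed graph is acyclic if no vertex reaches itself by a nonempty walk. -/
def Acyclic {n : ℕ} (E : Fin n → Fin n → Prop) : Prop :=
  ∀ v : Fin n, ¬ Relation.TransGen E v v

section Aux
open Polynomial

lemma spectrum_subset_zero_of_isNilpotent {m : Type*} [Fintype m] [DecidableEq m]
    {M : Matrix m m ℂ} (h : IsNilpotent M) : spectrum ℂ M ⊆ {0} := by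
  intro μ hμ
  simp only [Set.mem_singleton_iff]
  by_contra h0
  rw [spectrum.mem_iff] at hμ
  apply hμ
  have hu : IsUnit (algebraMap ℂ (Matrix m m ℂ) μ) :=
    (isUnit_iff_ne_zero.mpr h0).map (algebraMap ℂ (Matrix m m ℂ))
  have := h.neg.isUnit_add_left_of_commute hu (Algebra.commutes μ (-M)).symm
  simpa [sub_eq_add_neg] using this

lemma isNilpotent_of_spectrum_subset_zero {m : Type*} [Fintype m] [DecidableEq m]
    {M : Matrix m m ℂ} (h : spectrum ℂ M ⊆ {0}) : IsNilpotent M := by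
  set e := Matrix.toLinAlgEquiv (Pi.basisFun ℂ m)
  set φ := e M with hφ
  have hspec : spectrum ℂ φ = spectrum ℂ M := AlgEquiv.spectrum_eq e M
  have hnil : IsNilpotent φ := by
    set p := minpoly ℂ φ with hp
    have hmono : p.Monic := minpoly.monic (Algebra.IsIntegral.isIntegral φ)
    have hsplit : p.Splits := IsAlgClosed.splits p
    have hprod : p = (p.roots.map fun a => X - C a).prod :=
      hsplit.eq_prod_roots_of_monic hmono
    have hroots : ∀ q ∈ p.roots.map fun a => X - C a, q = (X : ℂ[X]) := by
      intro q hq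
      obtain ⟨a, ha, rfl⟩ := Multiset.mem_map.mp hq
      have : a ∈ spectrum ℂ φ := by
        rw [Module.End.hasEigenvalue_iff_mem_spectrum.symm,
          Module.End.hasEigenvalue_iff_isRoot]
        exact Polynomial.isRoot_of_mem_roots ha
      have : a = 0 := by rw [hspec] at this; exact h this
      rw [this, map_zero, sub_zero]
    have hcard : p = X ^ Multiset.card (p.roots.map fun a => X - C a) := by
      conv_lhs => rw [hprod]
      rw [Multiset.eq_replicate_of_mem hroots, Multiset.prod_replicate,
        Multiset.card_replicate]
    have h2 : aeval φ p = 0 := minpoly.aeval ℂ φ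
    rw [hcard, map_pow, aeval_X] at h2
    exact ⟨_, h2⟩
  obtain ⟨k, hk⟩ := hnil
  refine ⟨k, ?_⟩
  have : e (M ^ k) = 0 := by rw [map_pow]; exact hk
  simpa using congrArg e.symm this

lemma specRad_eq_zero_iff {n : ℕ} (X : Matrix (Fin n) (Fin n) ℝ) :
    specRad X = 0 ↔ IsNilpotent X := by
  set M := X.map (algebraMap ℝ ℂ) with hM
  have hMX : M = (algebraMap ℝ ℂ).mapMatrix X := rfl
  constructor
  · intro h
    have hsub : spectrum ℂ M ⊆ {0} := by
      intro μ hμ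
      have hfin : ((fun μ : ℂ => ‖μ‖) '' spectrum ℂ M).Finite :=
        (Matrix.finite_spectrum M).image _
      have hb : BddAbove ((fun μ : ℂ => ‖μ‖) '' spectrum ℂ M) := hfin.bddAbove
      have hle : ‖μ‖ ≤ specRad X := le_csSup hb ⟨μ, hμ, rfl⟩
      rw [h] at hle
      have : ‖μ‖ = 0 := le_antisymm hle (norm_nonneg μ)
      simpa using norm_eq_zero.mp this
    obtain ⟨k, hk⟩ := isNilpotent_of_spectrum_subset_zero hsub
    refine ⟨k, ?_⟩
    have hpow : (X ^ k).map (algebraMap ℝ ℂ) = (0 : Matrix (Fin n) (Fin n) ℝ).map (algebraMap ℝ ℂ) := by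
      have : ((algebraMap ℝ ℂ).mapMatrix (X ^ k) : Matrix (Fin n) (Fin n) ℂ)
          = (algebraMap ℝ ℂ).mapMatrix (0 : Matrix (Fin n) (Fin n) ℝ) := by
        rw [map_pow, map_zero, ← hMX, hk]
      exact this
    ext i j
    have h3 : (algebraMap ℝ ℂ) ((X ^ k) i j) = (algebraMap ℝ ℂ) ((0 : Matrix (Fin n) (Fin n) ℝ) i j) := by
      have := congrFun (congrFun hpow i) j
      simpa [Matrix.map_apply] using this
    simpa using (algebraMap ℝ ℂ).injective h3
  · intro h
    have hMnil : IsNilpotent M := by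
      obtain ⟨k, hk⟩ := h
      exact ⟨k, by rw [hMX, ← map_pow, hk, map_zero]⟩
    have hsub := spectrum_subset_zero_of_isNilpotent hMnil
    have himg : (fun μ : ℂ => ‖μ‖) '' spectrum ℂ M ⊆ {0} := by
      rintro - ⟨μ, hμ, rfl⟩
      simp [Set.mem_singleton_iff.mp (hsub hμ)]
    unfold specRad
    rcases Set.subset_singleton_iff_eq.mp himg with h0 | h0
    · rw [← hM, h0, Real.sSup_empty]
    · rw [← hM, h0, csSup_singleton]

lemma pow_entry_nonneg {n : ℕ} {X : Matrix (Fin n) (Fin n) ℝ}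
    (hX0 : ∀ i j, 0 ≤ X i j) : ∀ (k : ℕ) (i j), 0 ≤ (X ^ k) i j := by
  intro k
  induction k with
  | zero => intro i j; by_cases h : i = j <;> simp [pow_zero, Matrix.one_apply, h]
  | succ k ih =>
    intro i j
    rw [pow_succ, Matrix.mul_apply]
    exact Finset.sum_nonneg fun m _ => mul_nonneg (ih i m) (hX0 m j)

lemma transGen_pow_pos {n : ℕ} {X : Matrix (Fin n) (Fin n) ℝ}
    (hX0 : ∀ i j, 0 ≤ X i j) {u w : Fin n}
    (h : Relation.TransGen (fun i j => X j i ≠ 0) u w) :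
    ∃ k, 1 ≤ k ∧ 0 < (X ^ k) w u := by
  induction h with
  | single hx =>
    exact ⟨1, le_refl 1, by
      rw [pow_one]; exact lt_of_le_of_ne (hX0 _ _) (Ne.symm hx)⟩
  | tail _ hbc ih =>
    obtain ⟨k, hk1, hkpos⟩ := ih
    rename_i b c _
    refine ⟨k + 1, by omega, ?_⟩
    have hstep : 0 < X c b * (X ^ k) b u :=
      mul_pos (lt_of_le_of_ne (hX0 _ _) (Ne.symm hbc)) hkpos
    calc (0:ℝ) < X c b * (X ^ k) b u := hstep
      _ ≤ ∑ m, X c m * (X ^ k) m u := Finset.single_le_sum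
          (fun m _ => mul_nonneg (hX0 c m) (pow_entry_nonneg hX0 k m u))
          (Finset.mem_univ b)
      _ = (X ^ (k + 1)) c u := by rw [pow_succ', Matrix.mul_apply]

lemma diag_pow_pos {n : ℕ} {Y : Matrix (Fin n) (Fin n) ℝ}
    (hY0 : ∀ i j, 0 ≤ Y i j) {v : Fin n} (hv : 0 < Y v v) :
    ∀ m : ℕ, 0 < (Y ^ m) v v := by
  intro m
  induction m with
  | zero => simp [pow_zero, Matrix.one_apply_eq]
  | succ m ih =>
    calc (0:ℝ) < (Y ^ m) v v * Y v v := mul_pos ih hv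
      _ ≤ ∑ k, (Y ^ m) v k * Y k v := Finset.single_le_sum
          (fun k _ => mul_nonneg (pow_entry_nonneg hY0 m v k) (hY0 k v))
          (Finset.mem_univ v)
      _ = (Y ^ (m + 1)) v v := by rw [pow_succ, Matrix.mul_apply]

lemma acyclic_of_isNilpotent {n : ℕ} {X : Matrix (Fin n) (Fin n) ℝ}
    (hX0 : ∀ i j, 0 ≤ X i j) (hnil : IsNilpotent X) :
    Acyclic (fun i j => X j i ≠ 0) := by
  intro v hv
  obtain ⟨k, hk1, hkpos⟩ := transGen_pow_pos hX0 hv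
  obtain ⟨m, hm⟩ := hnil
  have hzero : (X ^ k) ^ m = 0 := by
    rw [← pow_mul, mul_comm, pow_mul, hm, zero_pow (by omega : k ≠ 0)]
  have hpos : 0 < ((X ^ k) ^ m) v v :=
    diag_pow_pos (pow_entry_nonneg hX0 k) hkpos m
  rw [hzero] at hpos
  simp at hpos

lemma pow_ne_zero_chain {n : ℕ} (B : Matrix (Fin n) (Fin n) ℝ) :
    ∀ (k : ℕ) (i j : Fin n), (B ^ k) j i ≠ 0 →
      ∃ f : ℕ → Fin n, f 0 = i ∧ f k = j ∧ ∀ t < k, B (f (t + 1)) (f t) ≠ 0 := by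
  intro k
  induction k with
  | zero =>
    intro i j h
    rw [pow_zero] at h
    have hij : j = i := by
      by_contra hne
      exact h (Matrix.one_apply_ne hne)
    exact ⟨fun _ => i, rfl, by rw [hij], fun t ht => absurd ht (by omega)⟩
  | succ k ih =>
    intro i j h
    rw [pow_succ', Matrix.mul_apply] at h
    obtain ⟨m, _, hm⟩ := Finset.exists_ne_zero_of_sum_ne_zero h
    have hBmi : B j m ≠ 0 := fun h0 => hm (by rw [h0, zero_mul])
    have hpow : (B ^ k) m i ≠ 0 := fun h0 => hm (by rw [h0, mul_zero])
    obtain ⟨f, hf0, hfk, hfs⟩ := ih i m hpow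
    refine ⟨fun t => if t = k + 1 then j else f t, by simp [hf0], by simp, ?_⟩
    intro t ht
    by_cases htk : t = k
    · subst htk
      simpa [hfk] using hBmi
    · have h1 : t + 1 ≠ k + 1 := by omega
      have h2 : t ≠ k + 1 := by omega
      simpa [h1, h2, htk] using hfs t (by omega)

lemma chain_transGen {n : ℕ} {B : Matrix (Fin n) (Fin n) ℝ} {k : ℕ} {f : ℕ → Fin n}
    (hstep : ∀ t < k, B (f (t + 1)) (f t) ≠ 0) :
    ∀ t, ∀ s, s < t → t ≤ k → Relation.TransGen (fun i j => B j i ≠ 0) (f s) (f t) := by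
  intro t
  induction t with
  | zero => intro s hs; omega
  | succ t ih =>
    intro s hs htk
    rcases Nat.lt_or_ge s t with hst | hst
    · exact (ih s hst (by omega)).tail (hstep t (by omega))
    · have : s = t := by omega
      subst this
      exact Relation.TransGen.single (hstep s (by omega))

lemma pow_card_eq_zero_of_acyclic {n : ℕ} {B : Matrix (Fin n) (Fin n) ℝ}
    (h : Acyclic (fun i j => B j i ≠ 0)) : B ^ n = 0 := by
  ext j i
  rw [Matrix.zero_apply]
  by_contra hne
  obtain ⟨f, hf0, hfk, hstep⟩ := pow_ne_zero_chain B n i j hne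
  have hnotinj : ¬ Function.Injective (fun t : Fin (n + 1) => f t) := by
    intro hinj
    have := Fintype.card_le_of_injective _ hinj
    simp at this
  rw [Function.not_injective_iff] at hnotinj
  obtain ⟨a, b, hab, hne'⟩ := hnotinj
  rcases Nat.lt_or_ge (a : ℕ) (b : ℕ) with hlt | hge
  · have := chain_transGen hstep b a hlt (by omega : (b:ℕ) ≤ n)
    rw [hab] at this
    exact h (f b) this
  · have hlt : (b : ℕ) < (a : ℕ) := by
      rcases Nat.lt_or_ge (b : ℕ) (a : ℕ) with h1 | h1
      · exact h1
      · exact absurd (Fin.ext (by omega)) hne'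
    have := chain_transGen hstep a b hlt (by omega : (a:ℕ) ≤ n)
    rw [← hab] at this
    exact h (f a) this
lemma bool_sub_sq {a b : ℝ} (ha : a = 0 ∨ a = 1) (hb : b = 0 ∨ b = 1) (hba : b ≤ a) :
    (b - a) ^ 2 = a - b := by
  rcases ha with rfl | rfl <;> rcases hb with rfl | rfl <;> linarith

lemma bool_sum_sq {n : ℕ} {A B : Matrix (Fin n) (Fin n) ℝ}
    (hA : ∀ i j, A i j = 0 ∨ A i j = 1) (hB : ∀ i j, B i j = 0 ∨ B i j = 1)
    (hBA : ∀ i j, B i j ≤ A i j) :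
    (∑ i, ∑ j, ((B - A) i j) ^ 2) = (∑ i, ∑ j, A i j) - ∑ i, ∑ j, B i j := by
  rw [← Finset.sum_sub_distrib]
  refine Finset.sum_congr rfl fun i _ => ?_
  rw [← Finset.sum_sub_distrib]
  refine Finset.sum_congr rfl fun j _ => ?_
  rw [Matrix.sub_apply]
  exact bool_sub_sq (hA i j) (hB i j) (hBA i j)


end Aux

/-- MAS vs the closest nilpotent nonnegative matrix problem.  Let `A` be a
Boolean adjacency matrix (edge `i → j` iff `A j i = 1`) and let `X` be a
minimizer of `‖X - A‖_F` over nonnegative matrices with spectral radius `0`.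
Then `X` is Boolean, `X ≤ A` entrywise, the graph of `X` is an acyclic subgraph
of the graph of `A` with the maximal possible number of edges (a maximal
acyclic subgraph), and the minimal distance `‖X - A‖_F` equals the square root
of the minimal number of deleted edges. -/
theorem stmt6 {n : ℕ} (A X : Matrix (Fin n) (Fin n) ℝ)
    (hA : ∀ i j, A i j = 0 ∨ A i j = 1)
    (hX0 : ∀ i j, 0 ≤ X i j) (hXρ : specRad X = 0)
    (hmin : ∀ Y : Matrix (Fin n) (Fin n) ℝ,
      (∀ i j, 0 ≤ Y i j) → specRad Y = 0 → frob (X - A) ≤ frob (Y - A)) :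
    (∀ i j, X i j = 0 ∨ X i j = 1) ∧
    (∀ i j, X i j ≤ A i j) ∧
    Acyclic (fun i j => X j i ≠ 0) ∧
    (∀ B : Matrix (Fin n) (Fin n) ℝ, (∀ i j, B i j = 0 ∨ B i j = 1) →
      (∀ i j, B i j ≤ A i j) → Acyclic (fun i j => B j i ≠ 0) →
      ∑ i, ∑ j, B i j ≤ ∑ i, ∑ j, X i j) ∧
    frob (X - A) = Real.sqrt ((∑ i, ∑ j, A i j) - ∑ i, ∑ j, X i j) := by
  have hXnil : IsNilpotent X := (specRad_eq_zero_iff X).mp hXρ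
  have hXacyc : Acyclic (fun i j => X j i ≠ 0) := acyclic_of_isNilpotent hX0 hXnil
  -- the rounded matrix
  set B : Matrix (Fin n) (Fin n) ℝ :=
    Matrix.of (fun i j => if X i j = 0 then 0 else A i j) with hBdef
  have hBapp : ∀ i j, B i j = if X i j = 0 then 0 else A i j := fun i j => rfl
  have hBbool : ∀ i j, B i j = 0 ∨ B i j = 1 := by
    intro i j; rw [hBapp]
    by_cases h : X i j = 0
    · simp [h]
    · simpa [h] using hA i j
  have hB0 : ∀ i j, 0 ≤ B i j := by
    intro i j; rcases hBbool i j with h | h <;> rw [h] <;> norm_num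
  have hBgraph : ∀ i j, B j i ≠ 0 → X j i ≠ 0 := by
    intro i j hb hx
    exact hb (by rw [hBapp, if_pos hx])
  have hBacyc : Acyclic (fun i j => B j i ≠ 0) := by
    intro v hv
    exact hXacyc v (Relation.TransGen.mono (fun a b h => hBgraph a b h) v v hv)
  have hBρ : specRad B = 0 :=
    (specRad_eq_zero_iff B).mpr ⟨n, pow_card_eq_zero_of_acyclic hBacyc⟩
  have hBle : ∀ i j, ((B - A) i j) ^ 2 ≤ ((X - A) i j) ^ 2 := by
    intro i j
    rw [Matrix.sub_apply, Matrix.sub_apply, hBapp]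
    by_cases h : X i j = 0
    · rw [if_pos h, h]
    · rw [if_neg h]
      simpa using sq_nonneg (X i j - A i j)
  have hsumle : (∑ i, ∑ j, ((B - A) i j) ^ 2) ≤ ∑ i, ∑ j, ((X - A) i j) ^ 2 :=
    Finset.sum_le_sum fun i _ => Finset.sum_le_sum fun j _ => hBle i j
  have hfroble : frob (X - A) ≤ frob (B - A) := hmin B hB0 hBρ
  have hsumge : (∑ i, ∑ j, ((X - A) i j) ^ 2) ≤ ∑ i, ∑ j, ((B - A) i j) ^ 2 := by
    by_contra hc
    push_neg at hc
    have hs : (0:ℝ) ≤ ∑ i, ∑ j, ((B - A) i j) ^ 2 :=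
      Finset.sum_nonneg fun i _ => Finset.sum_nonneg fun j _ => sq_nonneg _
    have := Real.sqrt_lt_sqrt hs hc
    rw [frob, frob] at hfroble
    linarith
  have hterm : ∀ i j, ((B - A) i j) ^ 2 = ((X - A) i j) ^ 2 := by
    by_contra hc
    push_neg at hc
    obtain ⟨i, j, hij⟩ := hc
    have hlt : (∑ i, ∑ j, ((B - A) i j) ^ 2) < ∑ i, ∑ j, ((X - A) i j) ^ 2 := by
      refine Finset.sum_lt_sum (fun i _ => Finset.sum_le_sum fun j _ => hBle i j) ⟨i,
        Finset.mem_univ i, ?_⟩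
      exact Finset.sum_lt_sum (fun j _ => hBle i j)
        ⟨j, Finset.mem_univ j, lt_of_le_of_ne (hBle i j) hij⟩
    linarith
  have hXA : ∀ i j, X i j = 0 ∨ X i j = A i j := by
    intro i j
    by_cases h : X i j = 0
    · exact Or.inl h
    · right
      have h1 := hterm i j
      rw [Matrix.sub_apply, Matrix.sub_apply, hBapp, if_neg h] at h1
      have : (X i j - A i j) ^ 2 = 0 := by rw [← h1]; ring
      have := sub_eq_zero.mp (pow_eq_zero_iff (by norm_num : 2 ≠ 0) |>.mp this)
      exact this
  have hXbool : ∀ i j, X i j = 0 ∨ X i j = 1 := by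
    intro i j
    rcases hXA i j with h | h
    · exact Or.inl h
    · rw [h]; exact hA i j
  have hXleA : ∀ i j, X i j ≤ A i j := by
    intro i j
    rcases hXA i j with h | h
    · rw [h]; rcases hA i j with h' | h' <;> rw [h'] <;> norm_num
    · rw [h]
  have hsum_nonneg : (0:ℝ) ≤ (∑ i, ∑ j, A i j) - ∑ i, ∑ j, X i j := by
    rw [sub_nonneg]
    exact Finset.sum_le_sum fun i _ => Finset.sum_le_sum fun j _ => hXleA i j
  have hfrobX : frob (X - A) = Real.sqrt ((∑ i, ∑ j, A i j) - ∑ i, ∑ j, X i j) := by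
    rw [frob, bool_sum_sq hA hXbool hXleA]
  refine ⟨hXbool, hXleA, hXacyc, ?_, hfrobX⟩
  intro C hCbool hCle hCacyc
  have hCρ : specRad C = 0 :=
    (specRad_eq_zero_iff C).mpr ⟨n, pow_card_eq_zero_of_acyclic hCacyc⟩
  have hC0 : ∀ i j, 0 ≤ C i j := by
    intro i j; rcases hCbool i j with h | h <;> rw [h] <;> norm_num
  have h1 := hmin C hC0 hCρ
  rw [hfrobX, frob, bool_sum_sq hA hCbool hCle] at h1
  by_contra hc
  push_neg at hc
  have h2 : (∑ i, ∑ j, A i j) - ∑ i, ∑ j, C i j < (∑ i, ∑ j, A i j) - ∑ i, ∑ j, X i j := by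
    linarith
  have hCA : (0:ℝ) ≤ (∑ i, ∑ j, A i j) - ∑ i, ∑ j, C i j := by
    rw [sub_nonneg]
    exact Finset.sum_le_sum fun i _ => Finset.sum_le_sum fun j _ => hCle i j
  have := Real.sqrt_lt_sqrt hCA h2
  linarith
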